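/- (Theorem 2 for the alternative ambiguity set.) Assume N ≥ |𝓜| + 1 and 1 ≤ k ≤ N, and let 𝔾 be a nonempty set of Borel probability measures on valuations. Define the alternative ambiguity set 𝔽̂ = {F : Fₙ ∈ 𝔾 for every bidder n}. Then inf_{F∈𝔽̂} E_F[Rᵏ_𝓜(v)] ≥ inf_{F∈𝔽̂} V_𝓜(F) − (k−1)·|𝓜|·v̄/N. -/

import Mathlib

open MeasureTheory
open scoped ENNReal BigOperators

namespace RankGuaranteedAuctions

/-- A bundle of items, where the set of items is `Fin M`. -/
abbrev Bundle (M : ℕ) := Finset (Fin M)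

/-- A valuation assigns a real value to every bundle. -/
abbrev Valuation (M : ℕ) := Bundle M → ℝ

/-- A valuation is normalized: value `0` for the empty bundle and values in `[0, vbar]`. -/
def IsValuation (M : ℕ) (vbar : ℝ) (v : Valuation M) : Prop :=
  v ∅ = 0 ∧ ∀ b : Bundle M, 0 ≤ v b ∧ v b ≤ vbar

/-- A menu is a nonempty collection of nonempty bundles. -/
def IsMenu (M : ℕ) (Menu : Finset (Bundle M)) : Prop :=
  Menu.Nonempty ∧ ∅ ∉ Menu

/-- The complete menu `2^S` of all nonempty bundles. -/
noncomputable def completeMenu (M : ℕ) : Finset (Bundle M) :=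
  Finset.univ.erase ∅

/-- A feasible allocation: a set of pairwise disjoint bundles from the menu. -/
def Feasible (M : ℕ) (Menu X : Finset (Bundle M)) : Prop :=
  X ⊆ Menu ∧ ∀ b ∈ X, ∀ b' ∈ X, b ≠ b' → Disjoint b b'

/-- The maximum of `∑ b ∈ X, f b` over feasible allocations `X` from the menu. -/
noncomputable def maxAlloc (M : ℕ) (Menu : Finset (Bundle M)) (f : Bundle M → ℝ) : ℝ :=
  sSup {y : ℝ | ∃ X : Finset (Bundle M), Feasible M Menu X ∧ y = ∑ b ∈ X, f b}

/-- The `k`-th highest value among `w 0, …, w (N-1)` (for `1 ≤ k ≤ N`):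
the maximum over sets `T` of `k` bidders of the minimum of `w` on `T`. -/
noncomputable def kthHighest (N : ℕ) (w : Fin N → ℝ) (k : ℕ) : ℝ :=
  sSup {x : ℝ | ∃ T : Finset (Fin N), T.card = k ∧ x = sInf (w '' (T : Set (Fin N)))}

/-- The `k`-th rank guarantee `R^k_𝓜(v)`. -/
noncomputable def rankGuarantee (M N : ℕ) (Menu : Finset (Bundle M))
    (v : Fin N → Valuation M) (k : ℕ) : ℝ :=
  maxAlloc M Menu fun b => kthHighest N (fun n => v n b) k

/-- The ex-post efficient surplus: the maximum over feasible allocations `X` with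
`|X| ≤ N` and injective assignments `ι` of bundles in `X` to bidders of the total value. -/
noncomputable def surplusEx (M N : ℕ) (Menu : Finset (Bundle M))
    (v : Fin N → Valuation M) : ℝ :=
  sSup {y : ℝ | ∃ X : Finset (Bundle M), Feasible M Menu X ∧ X.card ≤ N ∧
    ∃ ι : Bundle M → Fin N, Set.InjOn ι ↑X ∧ y = ∑ b ∈ X, v (ι b) b}

/-- The average `F̄ = (1/N) ∑ₙ Fₙ` of the bidder-marginals of `F`. -/
noncomputable def avgMarginal (M N : ℕ) (F : Measure (Fin N → Valuation M)) :
    Measure (Valuation M) :=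
  (N : ℝ≥0∞)⁻¹ • ∑ n : Fin N, F.map (fun v => v n)

/-- The ex-ante efficient surplus `V_𝓜(F)`. -/
noncomputable def Vsurplus (M N : ℕ) (Menu : Finset (Bundle M))
    (F : Measure (Fin N → Valuation M)) : ℝ :=
  ∫ v, surplusEx M N Menu v ∂F

/-- A Borel probability measure on valuation profiles (supported on profiles of
valuations bounded by `vbar`). -/
def ProfileOK (M N : ℕ) (vbar : ℝ) (F : Measure (Fin N → Valuation M)) : Prop :=
  IsProbabilityMeasure F ∧ F {v | ∀ n, IsValuation M vbar (v n)} = 1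

/-- A Borel probability measure on valuations (supported on valuations bounded by `vbar`). -/
def ValOK (M : ℕ) (vbar : ℝ) (G : Measure (Valuation M)) : Prop :=
  IsProbabilityMeasure G ∧ G {w | IsValuation M vbar w} = 1

/-- `κ` is a partition of the bundle `b` into nonempty, pairwise disjoint parts. -/
def IsPartitionOf (M : ℕ) (κ : Finset (Bundle M)) (b : Bundle M) : Prop :=
  (∀ c ∈ κ, c ≠ ∅) ∧ (∀ c ∈ κ, ∀ c' ∈ κ, c ≠ c' → Disjoint c c') ∧ κ.sup id = b

/-- Feasibility for homogeneous goods: total number of allocated items is at most `M`. -/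
def FeasibleQ (M : ℕ) (Menu X : Finset (Bundle M)) : Prop :=
  X ⊆ Menu ∧ ∑ b ∈ X, b.card ≤ M

/-- The maximum of `∑ b ∈ X, f b` over homogeneous-goods-feasible allocations `X`. -/
noncomputable def maxAllocQ (M : ℕ) (Menu : Finset (Bundle M)) (f : Bundle M → ℝ) : ℝ :=
  sSup {y : ℝ | ∃ X : Finset (Bundle M), FeasibleQ M Menu X ∧ y = ∑ b ∈ X, f b}

/-- An assignment of pairwise disjoint bundles to the `N` bidders. -/
def IsAssignment (M N : ℕ) (a : Fin N → Bundle M) : Prop :=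
  ∀ n n' : Fin N, n ≠ n' → Disjoint (a n) (a n')

/-- An assignment is efficient if it maximizes total value over all assignments. -/
def IsEfficient (M N : ℕ) (v : Fin N → Valuation M) (a : Fin N → Bundle M) : Prop :=
  IsAssignment M N a ∧
    ∀ a' : Fin N → Bundle M, IsAssignment M N a' → ∑ n, v n (a' n) ≤ ∑ n, v n (a n)

/-- The VCG revenue at the efficient assignment `a`: the sum over bidders `n` of
`max_{assignments to bidders other than n} ∑_{n' ≠ n} v^{n'} − ∑_{n' ≠ n} v^{n'}(a n')`. -/
noncomputable def vcgRevenue (M N : ℕ) (v : Fin N → Valuation M)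
    (a : Fin N → Bundle M) : ℝ :=
  ∑ n : Fin N,
    (sSup {y : ℝ | ∃ a' : Fin N → Bundle M, IsAssignment M N a' ∧ a' n = ∅ ∧
        y = ∑ n' ∈ Finset.univ.erase n, v n' (a' n')}
      - ∑ n' ∈ Finset.univ.erase n, v n' (a n'))

/-- An unbounded valuation: value `0` for the empty bundle and nonnegative values. -/
def IsValuationNN (M : ℕ) (v : Valuation M) : Prop :=
  v ∅ = 0 ∧ ∀ b : Bundle M, 0 ≤ v b

/-- The top-`(k-1)/N` quantile of `v b` under `G`. -/
noncomputable def quantileQ (M N k : ℕ) (G : Measure (Valuation M)) (b : Bundle M) : ℝ :=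
  sInf {q : ℝ | 0 ≤ q ∧ G {w | q < w b} ≤ ((k - 1 : ℕ) : ℝ≥0∞) / (N : ℝ≥0∞)}


/-! ### Auxiliary lemmas -/


lemma measurable_finset_inf' {ι δ : Type*} [MeasurableSpace δ] {s : Finset ι}
    (hs : s.Nonempty) {f : ι → δ → ℝ} (hf : ∀ i ∈ s, Measurable (f i)) :
    Measurable fun a => s.inf' hs fun i => f i a := by
  induction hs using Finset.Nonempty.cons_induction with
  | singleton i => simpa using hf i (by simp)
  | cons i s his hne ih =>
      simp only [Finset.inf'_cons (H := hne)]
      exact Measurable.min (hf i (by simp)) (ih fun j hj => hf j (by simp [hj]))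

lemma measurable_finset_sup'' {ι δ : Type*} [MeasurableSpace δ] {s : Finset ι}
    (hs : s.Nonempty) {f : ι → δ → ℝ} (hf : ∀ i ∈ s, Measurable (f i)) :
    Measurable fun a => s.sup' hs fun i => f i a := by
  induction hs using Finset.Nonempty.cons_induction with
  | singleton i => simpa using hf i (by simp)
  | cons i s his hne ih =>
      simp only [Finset.sup'_cons (H := hne)]
      exact Measurable.max (hf i (by simp)) (ih fun j hj => hf j (by simp [hj]))

lemma measurable_sSup_image {ι α : Type*} [Finite ι] [MeasurableSpace α]
    {C : Set ι} (hne : C.Nonempty) {g : ι → α → ℝ} (hg : ∀ i, Measurable (g i)) :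
    Measurable (fun a => sSup ((fun i => g i a) '' C)) := by
  classical
  have hfin := C.toFinite
  have hsne : hfin.toFinset.Nonempty := hfin.toFinset_nonempty.mpr hne
  have hrw : (fun a => sSup ((fun i => g i a) '' C))
      = fun a => hfin.toFinset.sup' hsne (fun i => g i a) := by
    funext a
    rw [Finset.sup'_eq_csSup_image]
    congr 1
    rw [hfin.coe_toFinset]
  rw [hrw]
  exact measurable_finset_sup'' hsne (fun i _ => hg i)

lemma measurable_sInf_image {ι α : Type*} [Finite ι] [MeasurableSpace α]
    {C : Set ι} (hne : C.Nonempty) {g : ι → α → ℝ} (hg : ∀ i, Measurable (g i)) :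
    Measurable (fun a => sInf ((fun i => g i a) '' C)) := by
  classical
  have hfin := C.toFinite
  have hsne : hfin.toFinset.Nonempty := hfin.toFinset_nonempty.mpr hne
  have hrw : (fun a => sInf ((fun i => g i a) '' C))
      = fun a => hfin.toFinset.inf' hsne (fun i => g i a) := by
    funext a
    rw [Finset.inf'_eq_csInf_image]
    congr 1
    rw [hfin.coe_toFinset]
  rw [hrw]
  exact measurable_finset_inf' hsne (fun i _ => hg i)



lemma feasible_empty (M : ℕ) (Menu : Finset (Bundle M)) : Feasible M Menu ∅ :=
  ⟨Finset.empty_subset _, by simp⟩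

lemma maxAlloc_eq (M : ℕ) (Menu : Finset (Bundle M)) (f : Bundle M → ℝ) :
    maxAlloc M Menu f = sSup ((fun X => ∑ b ∈ X, f b) '' {X | Feasible M Menu X}) := by
  unfold maxAlloc; congr 1; ext y
  simp only [Set.mem_setOf_eq, Set.mem_image]
  exact ⟨fun ⟨X, h, e⟩ => ⟨X, h, e.symm⟩, fun ⟨X, h, e⟩ => ⟨X, h, e.symm⟩⟩

lemma le_maxAlloc {M : ℕ} {Menu X : Finset (Bundle M)} (f : Bundle M → ℝ)
    (hX : Feasible M Menu X) : ∑ b ∈ X, f b ≤ maxAlloc M Menu f := by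
  rw [maxAlloc_eq]
  exact le_csSup ((Set.toFinite _).image _).bddAbove ⟨X, hX, rfl⟩

lemma maxAlloc_nonneg (M : ℕ) (Menu : Finset (Bundle M)) (f : Bundle M → ℝ) :
    0 ≤ maxAlloc M Menu f := by
  simpa using le_maxAlloc f (feasible_empty M Menu)

lemma maxAlloc_mem (M : ℕ) (Menu : Finset (Bundle M)) (f : Bundle M → ℝ) :
    ∃ X, Feasible M Menu X ∧ maxAlloc M Menu f = ∑ b ∈ X, f b := by
  rw [maxAlloc_eq]
  have h := Set.Nonempty.csSup_mem
    (⟨_, Set.mem_image_of_mem _ (show (∅ : Finset (Bundle M)) ∈ {X | Feasible M Menu X} from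
      feasible_empty M Menu)⟩)
    ((Set.toFinite {X | Feasible M Menu X}).image (fun X => ∑ b ∈ X, f b))
  obtain ⟨X, hX, e⟩ := h
  exact ⟨X, hX, e.symm⟩

lemma maxAlloc_le {M : ℕ} {Menu : Finset (Bundle M)} {f : Bundle M → ℝ} {vbar : ℝ}
    (hvbar : 0 ≤ vbar) (hf : ∀ b, f b ≤ vbar) :
    maxAlloc M Menu f ≤ (Menu.card : ℝ) * vbar := by
  obtain ⟨X, hX, e⟩ := maxAlloc_mem M Menu f
  rw [e]
  calc ∑ b ∈ X, f b ≤ ∑ _b ∈ X, vbar := Finset.sum_le_sum fun b _ => hf b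
    _ = (X.card : ℝ) * vbar := by rw [Finset.sum_const, nsmul_eq_mul]
    _ ≤ (Menu.card : ℝ) * vbar := by
        have := Finset.card_le_card hX.1
        exact mul_le_mul_of_nonneg_right (by exact_mod_cast this) hvbar

lemma kthHighest_eq (N : ℕ) (w : Fin N → ℝ) (k : ℕ) :
    kthHighest N w k
      = sSup ((fun T : Finset (Fin N) => sInf (w '' ↑T)) '' {T | T.card = k}) := by
  unfold kthHighest; congr 1; ext y
  simp only [Set.mem_setOf_eq, Set.mem_image]
  exact ⟨fun ⟨T, h, e⟩ => ⟨T, h, e.symm⟩, fun ⟨T, h, e⟩ => ⟨T, h, e.symm⟩⟩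

lemma exists_card_k {N k : ℕ} (hkN : k ≤ N) : ∃ T : Finset (Fin N), T.card = k := by
  obtain ⟨T, _, hT⟩ := Finset.exists_subset_card_eq (s := (Finset.univ : Finset (Fin N))) (n := k) (by simpa)
  exact ⟨T, hT⟩

lemma le_kthHighest {N k : ℕ} (w : Fin N → ℝ) {T : Finset (Fin N)} (hT : T.card = k) :
    sInf (w '' ↑T) ≤ kthHighest N w k := by
  rw [kthHighest_eq]
  exact le_csSup ((Set.toFinite _).image _).bddAbove ⟨T, hT, rfl⟩

lemma kthHighest_mem {N k : ℕ} (hkN : k ≤ N) (w : Fin N → ℝ) :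
    ∃ T : Finset (Fin N), T.card = k ∧ kthHighest N w k = sInf (w '' ↑T) := by
  obtain ⟨T0, hT0⟩ := exists_card_k hkN
  rw [kthHighest_eq]
  have h := Set.Nonempty.csSup_mem
    (s := (fun T : Finset (Fin N) => sInf (w '' ↑T)) '' {T | T.card = k})
    (⟨_, Set.mem_image_of_mem _ (show T0 ∈ {T : Finset (Fin N) | T.card = k} from hT0)⟩)
    ((Set.toFinite {T : Finset (Fin N) | T.card = k}).image _)
  obtain ⟨T, hT, e⟩ := h
  exact ⟨T, hT, e.symm⟩

lemma csInf_image_mem {N : ℕ} (w : Fin N → ℝ) {T : Finset (Fin N)} (hT : T.Nonempty) :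
    sInf (w '' ↑T) ∈ w '' ↑T :=
  Set.Nonempty.csInf_mem ((Finset.coe_nonempty.mpr hT).image w) (Set.toFinite _)

lemma kthHighest_nonneg {N k : ℕ} (hk1 : 1 ≤ k) (hkN : k ≤ N) {w : Fin N → ℝ}
    (hw : ∀ n, 0 ≤ w n) : 0 ≤ kthHighest N w k := by
  obtain ⟨T, hT⟩ := exists_card_k hkN
  have hTne : T.Nonempty := Finset.card_pos.mp (by omega)
  obtain ⟨n, _, he⟩ := csInf_image_mem w hTne
  calc (0:ℝ) ≤ w n := hw n
    _ = sInf (w '' ↑T) := he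
    _ ≤ kthHighest N w k := le_kthHighest w hT

lemma kthHighest_le {N k : ℕ} (hk1 : 1 ≤ k) (hkN : k ≤ N) {w : Fin N → ℝ} {vbar : ℝ}
    (hw : ∀ n, w n ≤ vbar) : kthHighest N w k ≤ vbar := by
  obtain ⟨T, hT, he⟩ := kthHighest_mem hkN w
  have hTne : T.Nonempty := Finset.card_pos.mp (by omega)
  obtain ⟨n, _, he2⟩ := csInf_image_mem w hTne
  rw [he, ← he2]; exact hw n

lemma kthHighest_count {N k : ℕ} (hk1 : 1 ≤ k) (hkN : k ≤ N) (w : Fin N → ℝ) :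
    (Finset.univ.filter fun n => kthHighest N w k < w n).card < k := by
  by_contra h
  push_neg at h
  obtain ⟨T, hTsub, hTcard⟩ := Finset.exists_subset_card_eq h
  have hTne : T.Nonempty := Finset.card_pos.mp (by omega)
  obtain ⟨n, hnT, he⟩ := csInf_image_mem w hTne
  have hn : kthHighest N w k < w n := by
    have := hTsub hnT
    exact (Finset.mem_filter.mp this).2
  have hle : sInf (w '' ↑T) ≤ kthHighest N w k := le_kthHighest w hTcard
  rw [he] at hn
  exact absurd hle (not_le.mpr hn)


lemma surplusEx_eq (M N : ℕ) (Menu : Finset (Bundle M)) (v : Fin N → Valuation M) :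
    surplusEx M N Menu v
      = sSup ((fun p : Finset (Bundle M) × (Bundle M → Fin N) => ∑ b ∈ p.1, v (p.2 b) b) ''
          {p | Feasible M Menu p.1 ∧ p.1.card ≤ N ∧ Set.InjOn p.2 ↑p.1}) := by
  unfold surplusEx; congr 1; ext y
  simp only [Set.mem_setOf_eq, Set.mem_image]
  constructor
  · rintro ⟨X, h1, h2, ι, h3, rfl⟩; exact ⟨(X, ι), ⟨h1, h2, h3⟩, rfl⟩
  · rintro ⟨⟨X, ι⟩, ⟨h1, h2, h3⟩, rfl⟩; exact ⟨X, h1, h2, ι, h3, rfl⟩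

lemma surplusEx_nonneg (M N : ℕ) (hN : 0 < N) (Menu : Finset (Bundle M))
    (v : Fin N → Valuation M) : 0 ≤ surplusEx M N Menu v := by
  rw [surplusEx_eq]
  refine le_csSup ((Set.toFinite _).image _).bddAbove ?_
  refine ⟨((∅ : Finset (Bundle M)), fun _ => ⟨0, hN⟩), ⟨feasible_empty M Menu, by simp, ?_⟩, by simp⟩
  simp [Set.injOn_empty]

lemma surplusEx_const {M N : ℕ} {Menu : Finset (Bundle M)} (hcard : Menu.card ≤ N)
    (hN : 0 < N) (w : Valuation M) :
    surplusEx M N Menu (fun _ => w) = maxAlloc M Menu w := by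
  unfold surplusEx maxAlloc; congr 1; ext y
  simp only [Set.mem_setOf_eq]
  constructor
  · rintro ⟨X, h1, _, ι, _, rfl⟩; exact ⟨X, h1, rfl⟩
  · rintro ⟨X, h1, rfl⟩
    have hXN : X.card ≤ N := le_trans (Finset.card_le_card h1.1) hcard
    refine ⟨X, h1, hXN, fun b => if h : b ∈ X then Fin.castLE hXN (X.equivFin ⟨b, h⟩)
      else ⟨0, hN⟩, ?_, rfl⟩
    intro a ha b hb hab
    rw [Finset.mem_coe] at ha hb
    simp only [dif_pos ha, dif_pos hb] at hab
    have h2 := Fin.castLE_injective hXN hab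
    have h3 := X.equivFin.injective h2
    exact congrArg Subtype.val h3

section Meas
variable {α : Type*} [MeasurableSpace α]

lemma measurable_maxAlloc_comp (M : ℕ) (Menu : Finset (Bundle M)) {g : α → Valuation M}
    (hg : ∀ b, Measurable fun a => g a b) :
    Measurable fun a => maxAlloc M Menu (g a) := by
  simp_rw [maxAlloc_eq]
  exact measurable_sSup_image (C := {X | Feasible M Menu X}) ⟨∅, feasible_empty M Menu⟩
    (g := fun X a => ∑ b ∈ X, g a b)
    (fun X => Finset.measurable_sum X fun b _ => hg b)

lemma measurable_kth {M N k : ℕ} (hk1 : 1 ≤ k) (hkN : k ≤ N) (b : Bundle M) :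
    Measurable fun v : Fin N → Valuation M => kthHighest N (fun n => v n b) k := by
  simp_rw [kthHighest_eq]
  obtain ⟨T0, hT0⟩ := exists_card_k hkN
  refine measurable_sSup_image ⟨T0, hT0⟩ (fun T => ?_)
  rcases T.eq_empty_or_nonempty with rfl | hT
  · simp only [Finset.coe_empty, Set.image_empty, Real.sInf_empty]
    exact measurable_const
  · exact measurable_sInf_image (Finset.coe_nonempty.mpr hT)
      (fun n => ((measurable_pi_apply b).comp (measurable_pi_apply n)))

lemma measurable_rank {M N k : ℕ} (hk1 : 1 ≤ k) (hkN : k ≤ N) (Menu : Finset (Bundle M)) :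
    Measurable fun v : Fin N → Valuation M => rankGuarantee M N Menu v k := by
  unfold rankGuarantee
  simp_rw [maxAlloc_eq]
  exact measurable_sSup_image (C := {X | Feasible M Menu X}) ⟨∅, feasible_empty M Menu⟩
    (g := fun X (v : Fin N → Valuation M) => ∑ b ∈ X, kthHighest N (fun n => v n b) k)
    (fun X => Finset.measurable_sum X fun b _ => measurable_kth hk1 hkN b)

lemma measurable_surplus {M N : ℕ} (hN : 0 < N) (Menu : Finset (Bundle M)) :
    Measurable fun v : Fin N → Valuation M => surplusEx M N Menu v := by
  simp_rw [surplusEx_eq]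
  refine measurable_sSup_image
    (C := {p : Finset (Bundle M) × (Bundle M → Fin N) |
      Feasible M Menu p.1 ∧ p.1.card ≤ N ∧ Set.InjOn p.2 ↑p.1})
    ⟨((∅ : Finset (Bundle M)), fun _ => ⟨0, hN⟩), feasible_empty M Menu, by simp,
      by simp [Set.injOn_empty]⟩
    (g := fun p (v : Fin N → Valuation M) => ∑ b ∈ p.1, v (p.2 b) b) (fun p => ?_)
  exact Finset.measurable_sum p.1 fun b _ =>
    (measurable_pi_apply b).comp (measurable_pi_apply (p.2 b))

end Meas

lemma key_ineq (M N : ℕ) {vbar : ℝ} (hvbar : 0 ≤ vbar) (Menu : Finset (Bundle M))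
    {k : ℕ} (hk1 : 1 ≤ k) (hkN : k ≤ N)
    (v : Fin N → Valuation M) (hv : ∀ n, IsValuation M vbar (v n)) :
    ∑ n : Fin N, maxAlloc M Menu (v n)
      ≤ (N : ℝ) * rankGuarantee M N Menu v k + ((k:ℝ) - 1) * (Menu.card : ℝ) * vbar := by
  classical
  set K : Bundle M → ℝ := fun b => kthHighest N (fun n => v n b) k with hKdef
  have hK0 : ∀ b, 0 ≤ K b := fun b => kthHighest_nonneg hk1 hkN (fun n => ((hv n).2 b).1)
  have hcount : ∀ b : Bundle M,
      ((Finset.univ.filter fun n => K b < v n b).card : ℝ) ≤ (k:ℝ) - 1 := by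
    intro b
    have h := kthHighest_count (w := fun n => v n b) hk1 hkN
    have h2 : (Finset.univ.filter fun n => K b < v n b).card + 1 ≤ k := h
    have := Nat.cast_le (α := ℝ) |>.mpr h2
    push_cast at this
    linarith
  choose Xs hXs hXsum using fun n => maxAlloc_mem M Menu (v n)
  have hrank : ∀ n, ∑ b ∈ Xs n, K b ≤ rankGuarantee M N Menu v k :=
    fun n => le_maxAlloc K (hXs n)
  calc ∑ n, maxAlloc M Menu (v n) = ∑ n, ∑ b ∈ Xs n, v n b :=
        Finset.sum_congr rfl fun n _ => hXsum n
    _ ≤ ∑ n, ∑ b ∈ Xs n, (K b + if K b < v n b then vbar else 0) := by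
        refine Finset.sum_le_sum fun n _ => Finset.sum_le_sum fun b _ => ?_
        by_cases h : K b < v n b
        · simp only [if_pos h]
          have := ((hv n).2 b).2
          linarith [hK0 b]
        · simp only [if_neg h, add_zero]
          exact not_lt.mp h
    _ = ∑ n, ∑ b ∈ Xs n, K b + ∑ n, ∑ b ∈ Xs n, (if K b < v n b then vbar else 0) := by
        rw [← Finset.sum_add_distrib]
        exact Finset.sum_congr rfl fun n _ => Finset.sum_add_distrib
    _ ≤ (N : ℝ) * rankGuarantee M N Menu v k + ((k:ℝ) - 1) * (Menu.card : ℝ) * vbar := by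
        refine add_le_add ?_ ?_
        · calc ∑ n, ∑ b ∈ Xs n, K b ≤ ∑ _n : Fin N, rankGuarantee M N Menu v k :=
              Finset.sum_le_sum fun n _ => hrank n
            _ = (N : ℝ) * rankGuarantee M N Menu v k := by
              rw [Finset.sum_const, nsmul_eq_mul]; simp
        · calc ∑ n, ∑ b ∈ Xs n, (if K b < v n b then vbar else 0)
              ≤ ∑ n : Fin N, ∑ b ∈ Menu, (if K b < v n b then vbar else 0) := by
                refine Finset.sum_le_sum fun n _ => ?_
                refine Finset.sum_le_sum_of_subset_of_nonneg (hXs n).1 fun b _ _ => ?_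
                split <;> simp [hvbar]
            _ = ∑ b ∈ Menu, ∑ n : Fin N, (if K b < v n b then vbar else 0) :=
                Finset.sum_comm
            _ ≤ ∑ _b ∈ Menu, ((k:ℝ) - 1) * vbar := by
                refine Finset.sum_le_sum fun b _ => ?_
                rw [← Finset.sum_filter]
                rw [Finset.sum_const, nsmul_eq_mul]
                exact mul_le_mul_of_nonneg_right (hcount b) hvbar
            _ = ((k:ℝ) - 1) * (Menu.card : ℝ) * vbar := by
                rw [Finset.sum_const, nsmul_eq_mul]; ring


lemma measurableSet_isValuation (M : ℕ) (vbar : ℝ) :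
    MeasurableSet {w : Valuation M | IsValuation M vbar w} := by
  have h : {w : Valuation M | IsValuation M vbar w}
      = (fun w : Valuation M => w ∅) ⁻¹' {0}
        ∩ ⋂ b : Bundle M, (fun w : Valuation M => w b) ⁻¹' (Set.Icc 0 vbar) := by
    ext w
    simp [IsValuation, Set.mem_iInter, Set.mem_Icc]
  rw [h]
  exact ((measurable_pi_apply _) (measurableSet_singleton 0)).inter
    (MeasurableSet.iInter fun b => (measurable_pi_apply b) measurableSet_Icc)

lemma measurableSet_profile (M N : ℕ) (vbar : ℝ) :
    MeasurableSet {v : Fin N → Valuation M | ∀ n, IsValuation M vbar (v n)} := by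
  have h : {v : Fin N → Valuation M | ∀ n, IsValuation M vbar (v n)}
      = ⋂ n : Fin N, (fun v : Fin N → Valuation M => v n) ⁻¹' {w | IsValuation M vbar w} := by
    ext v; simp
  rw [h]
  exact MeasurableSet.iInter fun n => (measurable_pi_apply n) (measurableSet_isValuation M vbar)



/-- Theorem 2 for the alternative ambiguity set
`𝔽̂ = {F : Fₙ ∈ 𝔾 for every bidder n}`: with `N ≥ |𝓜| + 1` and `1 ≤ k ≤ N`,
`inf_{F∈𝔽̂} E_F[R^k_𝓜(v)] ≥ inf_{F∈𝔽̂} V_𝓜(F) − (k−1)·|𝓜|·v̄/N`. -/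
theorem maxmin_rank_guarantee_bound_marginal_ambiguity
    (M N : ℕ) (hM : 1 ≤ M) (vbar : ℝ) (hvbar : 0 ≤ vbar)
    (Menu : Finset (Bundle M)) (hMenu : IsMenu M Menu)
    (hN : Menu.card + 1 ≤ N) (k : ℕ) (hk1 : 1 ≤ k) (hkN : k ≤ N)
    (GG : Set (Measure (Valuation M))) (hGGne : GG.Nonempty)
    (hGG : ∀ G ∈ GG, ValOK M vbar G) :
    sInf ((fun F => ∫ v, rankGuarantee M N Menu v k ∂F) ''
        {F : Measure (Fin N → Valuation M) |
          ProfileOK M N vbar F ∧ ∀ n : Fin N, F.map (fun v => v n) ∈ GG}) ≥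
      sInf ((fun F => Vsurplus M N Menu F) ''
        {F : Measure (Fin N → Valuation M) |
          ProfileOK M N vbar F ∧ ∀ n : Fin N, F.map (fun v => v n) ∈ GG})
        - ((k : ℝ) - 1) * (Menu.card : ℝ) * vbar / (N : ℝ) := by
  classical
  have hN0 : 0 < N := by omega
  have hNR : (0:ℝ) < (N:ℝ) := by exact_mod_cast hN0
  have hk1R : (1:ℝ) ≤ (k:ℝ) := by exact_mod_cast hk1
  set c : ℝ := ((k:ℝ) - 1) * (Menu.card : ℝ) * vbar / (N:ℝ) with hcdef
  have hc0 : 0 ≤ c :=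
    div_nonneg (mul_nonneg (mul_nonneg (by linarith) (Nat.cast_nonneg _)) hvbar) (le_of_lt hNR)
  set S : Set (Measure (Fin N → Valuation M)) :=
    {F | ProfileOK M N vbar F ∧ ∀ n : Fin N, F.map (fun v => v n) ∈ GG} with hSdef
  rw [ge_iff_le]
  rcases S.eq_empty_or_nonempty with hSe | hSne
  · rw [hSe]
    simp only [Set.image_empty, Real.sInf_empty]
    linarith
  · have hVlb : ∀ y ∈ (fun F => Vsurplus M N Menu F) '' S, 0 ≤ y := by
      rintro y ⟨F, hF, rfl⟩
      exact integral_nonneg fun v => surplusEx_nonneg M N hN0 Menu v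
    refine le_csInf (hSne.image _) ?_
    rintro y ⟨F, hF, rfl⟩
    obtain ⟨⟨hFprob, hFsupp⟩, hFmarg⟩ := hF
    haveI := hFprob
    have hae : ∀ᵐ v ∂F, ∀ n, IsValuation M vbar (v n) := by
      rw [ae_iff]
      have h0 : F {v : Fin N → Valuation M | ∀ n, IsValuation M vbar (v n)}ᶜ = 0 :=
        (prob_compl_eq_zero_iff (measurableSet_profile M N vbar)).mpr hFsupp
      rw [Set.compl_setOf] at h0
      simpa using h0
    set B : ℝ := (Menu.card : ℝ) * vbar with hBdef
    have hB0 : 0 ≤ B := mul_nonneg (Nat.cast_nonneg _) hvbar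
    have hmA : ∀ n : Fin N, Measurable fun v : Fin N → Valuation M => maxAlloc M Menu (v n) :=
      fun n => measurable_maxAlloc_comp M Menu (g := fun v : Fin N → Valuation M => v n)
        (fun b => (measurable_pi_apply b).comp (measurable_pi_apply n))
    have hmA0 : Measurable fun w : Valuation M => maxAlloc M Menu w :=
      measurable_maxAlloc_comp M Menu (g := fun w => w) (fun b => measurable_pi_apply b)
    have hmR : Measurable fun v : Fin N → Valuation M => rankGuarantee M N Menu v k :=
      measurable_rank hk1 hkN Menu
    have hintA : ∀ n : Fin N,
        Integrable (fun v : Fin N → Valuation M => maxAlloc M Menu (v n)) F := by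
      intro n
      refine ⟨(hmA n).aestronglyMeasurable, HasFiniteIntegral.of_bounded (C := B) ?_⟩
      filter_upwards [hae] with v hv
      rw [Real.norm_eq_abs, abs_le]
      refine ⟨by linarith [maxAlloc_nonneg M Menu (v n)], ?_⟩
      exact maxAlloc_le hvbar fun b => ((hv n).2 b).2
    have hintR : Integrable (fun v : Fin N → Valuation M => rankGuarantee M N Menu v k) F := by
      refine ⟨hmR.aestronglyMeasurable, HasFiniteIntegral.of_bounded (C := B) ?_⟩
      filter_upwards [hae] with v hv
      rw [Real.norm_eq_abs, abs_le]
      constructor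
      · have h := maxAlloc_nonneg M Menu (fun b => kthHighest N (fun n => v n b) k)
        have h2 : (0:ℝ) ≤ rankGuarantee M N Menu v k := h
        linarith
      · have h : maxAlloc M Menu (fun b => kthHighest N (fun n => v n b) k) ≤ B :=
          maxAlloc_le hvbar fun b => kthHighest_le hk1 hkN (fun n => ((hv n).2 b).2)
        exact h
    have hptw : ∀ᵐ v ∂F, (N:ℝ)⁻¹ * ∑ n, maxAlloc M Menu (v n) - c
        ≤ rankGuarantee M N Menu v k := by
      filter_upwards [hae] with v hv
      have hkey := key_ineq M N hvbar Menu hk1 hkN v hv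
      have hcN : c * (N:ℝ) = ((k:ℝ) - 1) * (Menu.card : ℝ) * vbar := by
        rw [hcdef]; field_simp
      have h2 : (N:ℝ)⁻¹ * (∑ n, maxAlloc M Menu (v n))
          ≤ (N:ℝ)⁻¹ * ((N:ℝ) * rankGuarantee M N Menu v k + c * (N:ℝ)) := by
        rw [hcN]
        exact mul_le_mul_of_nonneg_left hkey (inv_nonneg.mpr (le_of_lt hNR))
      have h3 : (N:ℝ)⁻¹ * ((N:ℝ) * rankGuarantee M N Menu v k + c * (N:ℝ))
          = rankGuarantee M N Menu v k + c := by
        field_simp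
      linarith
    have hintSum : Integrable (fun v : Fin N → Valuation M =>
        ∑ n, maxAlloc M Menu (v n)) F := integrable_finset_sum _ (fun n _ => hintA n)
    have hintL : Integrable (fun v : Fin N → Valuation M =>
        (N:ℝ)⁻¹ * ∑ n, maxAlloc M Menu (v n) - c) F :=
      (hintSum.const_mul _).sub (integrable_const c)
    have hmono := integral_mono_ae hintL hintR hptw
    have hLHS : ∫ v, ((N:ℝ)⁻¹ * ∑ n, maxAlloc M Menu (v n) - c) ∂F
        = (N:ℝ)⁻¹ * ∑ n, (∫ v, maxAlloc M Menu (v n) ∂F) - c := by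
      rw [integral_sub (hintSum.const_mul _) (integrable_const c)]
      rw [integral_const_mul, integral_finset_sum _ (fun n _ => hintA n), integral_const]
      simp [measure_univ]
    have heval : ∀ n : Fin N, Measurable fun v : Fin N → Valuation M => v n :=
      fun n => measurable_pi_apply n
    set a : Fin N → ℝ := fun n => ∫ w, maxAlloc M Menu w ∂(F.map (fun v => v n)) with hadef
    have hmap : ∀ n : Fin N, ∫ v, maxAlloc M Menu (v n) ∂F = a n := by
      intro n
      show _ = ∫ w, maxAlloc M Menu w ∂(F.map (fun v => v n))
      rw [integral_map (heval n).aemeasurable hmA0.aestronglyMeasurable]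
    obtain ⟨n₀, _, hmin⟩ := Finset.exists_min_image Finset.univ a ⟨⟨0, hN0⟩, Finset.mem_univ _⟩
    have hsum_min : (N:ℝ) * a n₀ ≤ ∑ n, a n := by
      have h := Finset.card_nsmul_le_sum Finset.univ a (a n₀)
        (fun n _ => hmin n (Finset.mem_univ n))
      simpa [nsmul_eq_mul, Finset.card_univ] using h
    set G : Measure (Valuation M) := F.map (fun v => v n₀) with hGdef
    have hdiag : Measurable fun w : Valuation M => (fun _ : Fin N => w) :=
      measurable_pi_lambda _ fun _ => measurable_id
    set F' : Measure (Fin N → Valuation M) := G.map (fun w => fun _ : Fin N => w) with hF'def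
    haveI hGprob : IsProbabilityMeasure G := Measure.isProbabilityMeasure_map (heval n₀).aemeasurable
    haveI hF'prob : IsProbabilityMeasure F' := Measure.isProbabilityMeasure_map hdiag.aemeasurable
    have hF'marg : ∀ m : Fin N, F'.map (fun v => v m) = G := by
      intro m
      rw [hF'def, Measure.map_map (heval m) hdiag]
      have h : ((fun v : Fin N → Valuation M => v m)
          ∘ (fun w : Valuation M => fun _ : Fin N => w)) = id := rfl
      rw [h, Measure.map_id]
    have hGsupp : G {w : Valuation M | IsValuation M vbar w} = 1 := by
      rw [hGdef, Measure.map_apply (heval n₀) (measurableSet_isValuation M vbar)]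
      refine le_antisymm prob_le_one ?_
      calc (1:ℝ≥0∞) = F {v | ∀ n, IsValuation M vbar (v n)} := hFsupp.symm
        _ ≤ F ((fun v : Fin N → Valuation M => v n₀) ⁻¹' {w | IsValuation M vbar w}) :=
          measure_mono fun v hv => hv n₀
    have hF'supp : F' {v : Fin N → Valuation M | ∀ n, IsValuation M vbar (v n)} = 1 := by
      rw [hF'def, Measure.map_apply hdiag (measurableSet_profile M N vbar)]
      have hpre : ((fun w : Valuation M => fun _ : Fin N => w) ⁻¹'
          {v : Fin N → Valuation M | ∀ n, IsValuation M vbar (v n)})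
          = {w : Valuation M | IsValuation M vbar w} := by
        haveI : Nonempty (Fin N) := ⟨⟨0, hN0⟩⟩
        ext w
        simp [Set.mem_preimage]
      rw [hpre, hGsupp]
    have hF'mem : F' ∈ S := by
      refine ⟨⟨hF'prob, hF'supp⟩, fun m => ?_⟩
      rw [hF'marg m, hGdef]
      exact hFmarg n₀
    have hVF' : Vsurplus M N Menu F' = a n₀ := by
      unfold Vsurplus
      rw [hF'def, integral_map hdiag.aemeasurable
        (measurable_surplus hN0 Menu).aestronglyMeasurable]
      have h : (fun w : Valuation M => surplusEx M N Menu (fun _ => w))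
          = fun w => maxAlloc M Menu w := funext fun w => surplusEx_const (by omega) hN0 w
      rw [hadef, hGdef]
      exact congrArg (fun f => ∫ w, f w ∂(F.map (fun v => v n₀))) h
    have hsInfV : sInf ((fun F => Vsurplus M N Menu F) '' S) ≤ a n₀ := by
      rw [← hVF']
      exact csInf_le ⟨0, fun y hy => hVlb y hy⟩ ⟨F', hF'mem, rfl⟩
    have h1 : a n₀ ≤ (N:ℝ)⁻¹ * ∑ n, a n := by
      have h2 := mul_le_mul_of_nonneg_left hsum_min (inv_nonneg.mpr (le_of_lt hNR))
      have h3 : (N:ℝ)⁻¹ * ((N:ℝ) * a n₀) = a n₀ := by field_simp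
      linarith
    have hsum_eq : ∑ n, (∫ v, maxAlloc M Menu (v n) ∂F) = ∑ n, a n :=
      Finset.sum_congr rfl fun n _ => hmap n
    rw [hLHS, hsum_eq] at hmono
    simp only []
    linarith



end RankGuaranteedAuctions
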